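/- Let C > 0, let n be a positive integer, let c ≥ 2 be an integer, let d be a positive integer, let b be a nonnegative integer, let X be an n × d real matrix with rows x₁,…,xₙ, and let W be a d × c real matrix with columns w₁,…,w_c, all rows of X and columns of W nonzero. Let ε be an n × c random matrix such that for every (i,j) and every t > 0, P(|ε_{i,j}| > t) ≤ 2·exp(−C·t²·d / (2^{−2b}·‖x_i‖²·‖w_j‖²)). Let g : ℝ^{n×c} → ℝ be twice continuously differentiable with Hessian operator norm bounded everywhere by M ≥ 0. Then there exists a constant K > 0 depending only on C and n such that for every fixed H ∈ ℝ^{n×c}, with probability at least 0.99: |g(H + ε) − g(H)| ≤ K·2^{−b}·√(log c / d)·‖∇g(H)‖_F·‖X‖_F·‖W‖_F + (M/2)·K²·2^{−2b}·(log c / d)·‖X‖_F²·‖W‖_F². -/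

import Mathlib

open MeasureTheory

/-- Euclidean (ℓ²) norm of a vector in `ℝ^d`. -/
noncomputable def euclNorm {d : ℕ} (v : Fin d → ℝ) : ℝ :=
  Real.sqrt (∑ k, v k ^ 2)

/-- Frobenius norm of a real matrix. -/
noncomputable def frobNorm {a b : ℕ} (A : Matrix (Fin a) (Fin b) ℝ) : ℝ :=
  Real.sqrt (∑ i, ∑ j, A i j ^ 2)

lemma euclNorm_nonneg {d : ℕ} (v : Fin d → ℝ) : 0 ≤ euclNorm v := Real.sqrt_nonneg _

lemma euclNorm_sq {d : ℕ} (v : Fin d → ℝ) : euclNorm v ^ 2 = ∑ k, v k ^ 2 :=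
  Real.sq_sqrt (Finset.sum_nonneg fun k _ => sq_nonneg _)

lemma euclNorm_pos {d : ℕ} (v : Fin d → ℝ) (hv : v ≠ 0) : 0 < euclNorm v := by
  rw [euclNorm, Real.sqrt_pos]
  rcases Function.ne_iff.1 hv with ⟨k, hk⟩
  have : (0:ℝ) < v k ^ 2 := (sq_abs (v k)) ▸ pow_pos (abs_pos.2 hk) 2
  exact lt_of_lt_of_le this (Finset.single_le_sum (fun i _ => sq_nonneg (v i)) (Finset.mem_univ k))

lemma frobNorm_nonneg {a b : ℕ} (A : Matrix (Fin a) (Fin b) ℝ) : 0 ≤ frobNorm A :=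
  Real.sqrt_nonneg _

lemma frobNorm_sq {a b : ℕ} (A : Matrix (Fin a) (Fin b) ℝ) :
    frobNorm A ^ 2 = ∑ i, ∑ j, A i j ^ 2 :=
  Real.sq_sqrt (Finset.sum_nonneg fun i _ => Finset.sum_nonneg fun j _ => sq_nonneg _)

lemma taylor_aux {N : Type*} [NormedAddCommGroup N] [InnerProductSpace ℝ N] [CompleteSpace N]
    (g : N → ℝ) (hg : ContDiff ℝ 2 g) (M : ℝ) (hM : 0 ≤ M)
    (hHess : ∀ Y E : N, |fderiv ℝ (fderiv ℝ g) Y E E| ≤ M * ‖E‖ ^ 2)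
    (H E : N) :
    |g (H + E) - g H| ≤ ‖gradient g H‖ * ‖E‖ + M * ‖E‖ ^ 2 := by
  have hdg : Differentiable ℝ g := hg.differentiable (by norm_num)
  have hdF : Differentiable ℝ (fderiv ℝ g) :=
    (hg.fderiv_right (m := 1) le_rfl).differentiable (by norm_num)
  set F := fderiv ℝ g with hF
  set l : ℝ → N := fun t => H + t • E with hl
  have hlder : ∀ t : ℝ, HasDerivAt l E t := by
    intro t
    simpa [hl] using ((hasDerivAt_id t).smul_const E).const_add H
  set h : ℝ → ℝ := fun t => F (l t) E with hh
  have hhder : ∀ t : ℝ, HasDerivAt h (fderiv ℝ F (l t) E E) t := by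
    intro t
    have h1 : HasDerivAt (fun t => F (l t)) (fderiv ℝ F (l t) E) t :=
      (hdF (l t)).hasFDerivAt.comp_hasDerivAt t (hlder t)
    have h2 := h1.clm_apply (hasDerivAt_const t E)
    simpa using h2
  have hhb : ∀ t : ℝ, |h t - h 0| ≤ (M * ‖E‖ ^ 2) * |t| := by
    intro t
    have := (convex_univ (𝕜 := ℝ) (E := ℝ)).norm_image_sub_le_of_norm_hasDerivWithin_le
      (f := h) (f' := fun t => fderiv ℝ F (l t) E E)
      (fun x _ => (hhder x).hasDerivWithinAt)
      (fun x _ => by simpa using hHess (l x) E) (Set.mem_univ 0) (Set.mem_univ t)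
    simpa using this
  set ψ : ℝ → ℝ := fun t => g (l t) - t * h 0 with hψ
  have hψder : ∀ t : ℝ, HasDerivAt ψ (h t - h 0) t := by
    intro t
    have h1 : HasDerivAt (fun t => g (l t)) (F (l t) E) t :=
      (hdg (l t)).hasFDerivAt.comp_hasDerivAt t (hlder t)
    have := h1.sub ((hasDerivAt_id t).mul_const (h 0)); simp only [one_mul] at this; exact this
  have hmv : |ψ 1 - ψ 0| ≤ M * ‖E‖ ^ 2 := by
    have := (convex_Icc (0:ℝ) 1).norm_image_sub_le_of_norm_hasDerivWithin_le
      (f := ψ) (f' := fun t => h t - h 0)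
      (fun x _ => (hψder x).hasDerivWithinAt)
      (fun x hx => by
        have h1 := hhb x
        have h2 : |x| ≤ 1 := by
          rw [abs_of_nonneg hx.1]; exact hx.2
        have hM0 : (0:ℝ) ≤ M * ‖E‖ ^ 2 := by positivity
        have h3 : (M * ‖E‖ ^ 2) * |x| ≤ M * ‖E‖ ^ 2 := by nlinarith
        show ‖h x - h 0‖ ≤ M * ‖E‖ ^ 2
        rw [Real.norm_eq_abs]; exact h1.trans h3)
      (Set.mem_Icc.2 ⟨le_rfl, zero_le_one⟩) (Set.mem_Icc.2 ⟨zero_le_one, le_rfl⟩)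
    simpa using this
  have hl0 : l 0 = H := by simp [hl]
  have hl1 : l 1 = H + E := by simp [hl]
  have hψval : ψ 1 - ψ 0 = g (H + E) - g H - h 0 := by
    simp [hψ, hl0, hl1]; ring
  have hinner : h 0 = (inner ℝ (gradient g H) E : ℝ) := by
    simp [hh, hl0, gradient, hF]
  have hCS : |h 0| ≤ ‖gradient g H‖ * ‖E‖ := by
    rw [hinner]; exact abs_real_inner_le_norm _ _
  calc |g (H + E) - g H| = |(ψ 1 - ψ 0) + h 0| := by rw [hψval]; ring_nf
    _ ≤ |ψ 1 - ψ 0| + |h 0| := abs_add_le _ _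
    _ ≤ M * ‖E‖ ^ 2 + ‖gradient g H‖ * ‖E‖ := add_le_add hmv hCS
    _ = _ := by ring

/-- Layer-wise quantization error corollary: under the sub-Gaussian tail assumption for
`b`-bit RaBitQ-H quantization error of a linear layer (input `X ∈ ℝ^{n×d}`, weights
`W ∈ ℝ^{d×c}`), there is a constant `K > 0` depending only on `C` and `n` such that for
any `C²` function `g` with Hessian bounded by `M` and any `H`, with probability at
least `0.99`,
`|g(H+ε) − g(H)| ≤ K 2^{−b} √(log c / d) ‖∇g(H)‖_F ‖X‖_F ‖W‖_F
  + (M/2) K² 2^{−2b} (log c / d) ‖X‖_F² ‖W‖_F²`. -/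
theorem stmt7 (C : ℝ) (hC : 0 < C) (n : ℕ) (hn : 0 < n) :
    ∃ K : ℝ, 0 < K ∧
      ∀ (c : ℕ), 2 ≤ c → ∀ (d : ℕ), 0 < d → ∀ (b : ℕ),
      ∀ (X : Matrix (Fin n) (Fin d) ℝ) (W : Matrix (Fin d) (Fin c) ℝ),
      (∀ i, X i ≠ 0) → (∀ j, (fun k => W k j) ≠ 0) →
      ∀ (Ω : Type) [MeasurableSpace Ω] (μ : Measure Ω) [IsProbabilityMeasure μ]
        (ε : Ω → EuclideanSpace ℝ (Fin n × Fin c)),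
      (∀ i j, ∀ t : ℝ, 0 < t →
        μ {ω | t < |ε ω (i, j)|} ≤
          ENNReal.ofReal (2 * Real.exp (-(C * t ^ 2 * d) /
            ((2 : ℝ) ^ (-(2 * b : ℤ)) * euclNorm (X i) ^ 2 * euclNorm (fun k => W k j) ^ 2)))) →
      ∀ (g : EuclideanSpace ℝ (Fin n × Fin c) → ℝ), ContDiff ℝ 2 g →
      ∀ (M : ℝ), 0 ≤ M →
      (∀ Y E : EuclideanSpace ℝ (Fin n × Fin c),
        |fderiv ℝ (fderiv ℝ g) Y E E| ≤ M * ‖E‖ ^ 2) →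
      ∀ (H : EuclideanSpace ℝ (Fin n × Fin c)),
      ENNReal.ofReal 0.99 ≤
        μ {ω | |g (H + ε ω) - g H| ≤
          K * (2 : ℝ) ^ (-(b : ℤ)) * Real.sqrt (Real.log c / d) * ‖gradient g H‖ *
            frobNorm X * frobNorm W +
          M / 2 * K ^ 2 * (2 : ℝ) ^ (-(2 * b : ℤ)) * (Real.log c / d) *
            frobNorm X ^ 2 * frobNorm W ^ 2} := by
  have hlog2 : (0:ℝ) < Real.log 2 := Real.log_pos one_lt_two
  have hn1 : (1:ℝ) ≤ n := by exact_mod_cast hn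
  have h200n : (1:ℝ) ≤ 200 * n := by nlinarith
  have h200n0 : (0:ℝ) < 200 * n := by linarith
  set q : ℝ := Real.log (200 * n) / Real.log 2 with hq_def
  set a : ℝ := 1 + q with ha_def
  have hL0 : 0 ≤ Real.log (200 * n) := Real.log_nonneg h200n
  have hq0 : 0 ≤ q := div_nonneg hL0 hlog2.le
  have ha1 : (1:ℝ) ≤ a := by simp [ha_def]; linarith
  have ha0 : (0:ℝ) < a := lt_of_lt_of_le one_pos ha1
  set K0 : ℝ := Real.sqrt (a / C) with hK0_def
  have hK0 : 0 < K0 := Real.sqrt_pos.2 (div_pos ha0 hC)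
  have hK0sq : K0 ^ 2 = a / C := Real.sq_sqrt (le_of_lt (div_pos ha0 hC))
  refine ⟨Real.sqrt 2 * K0, by positivity, ?_⟩
  intro c hc d hd b X W hX hW Ω _ μ _ ε htail g hg M hM hHess H
  have hc1 : (1:ℝ) < c := by exact_mod_cast lt_of_lt_of_le one_lt_two hc
  have hc0 : (0:ℝ) < c := lt_trans one_pos hc1
  have hc2 : (2:ℝ) ≤ c := by exact_mod_cast hc
  have hlogc : 0 < Real.log c := Real.log_pos hc1
  have hd0 : (0:ℝ) < d := by exact_mod_cast hd
  set s : ℝ := (2:ℝ) ^ (-(b:ℤ)) * Real.sqrt (Real.log c / d) with hs_def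
  have h2b : (0:ℝ) < (2:ℝ) ^ (-(b:ℤ)) := zpow_pos two_pos _
  have h2b2 : (0:ℝ) < (2:ℝ) ^ (-(2*b:ℤ)) := zpow_pos two_pos _
  have hs0 : 0 < s := mul_pos h2b (Real.sqrt_pos.2 (div_pos hlogc hd0))
  have hzz : ((2:ℝ) ^ (-(b:ℤ))) ^ 2 = (2:ℝ) ^ (-(2*b:ℤ)) := by
    rw [← zpow_natCast ((2:ℝ) ^ (-(b:ℤ))) 2, ← zpow_mul]
    norm_num; ring_nf
  have hssq : s ^ 2 = (2:ℝ) ^ (-(2*b:ℤ)) * (Real.log c / d) := by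
    rw [hs_def, mul_pow, hzz, Real.sq_sqrt (div_pos hlogc hd0).le]
  set t : Fin n × Fin c → ℝ :=
    fun p => K0 * s * euclNorm (X p.1) * euclNorm (fun k => W k p.2) with ht_def
  have hxpos : ∀ i, 0 < euclNorm (X i) := fun i => euclNorm_pos _ (hX i)
  have hwpos : ∀ j, 0 < euclNorm (fun k => W k j) := fun j => euclNorm_pos _ (hW j)
  have htp : ∀ p, 0 < t p := fun p =>
    mul_pos (mul_pos (mul_pos hK0 hs0) (hxpos p.1)) (hwpos p.2)
  set A : Set Ω := ⋃ p : Fin n × Fin c, {ω | t p < |ε ω p|} with hA_def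
  -- per-entry tail bound
  have htail' : ∀ p : Fin n × Fin c,
      μ {ω | t p < |ε ω p|} ≤ ENNReal.ofReal (2 * Real.exp (-(a * Real.log c))) := by
    intro p
    have h1 := htail p.1 p.2 (t p) (htp p)
    set x : ℝ := euclNorm (X p.1) with hx_def
    set w : ℝ := euclNorm (fun k => W k p.2) with hw_def
    have hxp := hxpos p.1
    have hwp := hwpos p.2
    have hden : (2:ℝ) ^ (-(2*b:ℤ)) * x ^ 2 * w ^ 2 ≠ 0 := by positivity
    have hKC : C * K0 ^ 2 = a := by rw [hK0sq]; field_simp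
    have htp2 : (t p) ^ 2 = K0 ^ 2 * ((2:ℝ) ^ (-(2*b:ℤ)) * (Real.log c / d)) * x ^ 2 * w ^ 2 := by
      simp only [ht_def]
      rw [mul_pow, mul_pow, mul_pow, hssq]
    have hnum : C * (t p) ^ 2 * (d:ℝ)
        = (a * Real.log c) * ((2:ℝ) ^ (-(2*b:ℤ)) * x ^ 2 * w ^ 2) := by
      rw [htp2, ← hKC]
      field_simp
    have hexp : -(C * (t p) ^ 2 * (d:ℝ)) /
        ((2:ℝ) ^ (-(2*b:ℤ)) * x ^ 2 * w ^ 2) = -(a * Real.log c) := by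
      rw [hnum, neg_div, mul_div_assoc, div_self hden, mul_one]
    rw [hexp] at h1
    simpa using h1
  -- union bound
  have harith : ((n : ℝ) * c) * (2 * Real.exp (-(a * Real.log c))) ≤ 1/100 := by
    have hrw : Real.exp (-(a * Real.log c)) = (c:ℝ) ^ (-a) := by
      rw [Real.rpow_def_of_pos hc0]; congr 1; ring
    rw [hrw]
    have hsplit : (c:ℝ) * (c:ℝ) ^ (-a) = (c:ℝ) ^ (-q) := by
      nth_rewrite 1 [← Real.rpow_one (c:ℝ)]
      rw [← Real.rpow_add hc0]
      congr 1
      rw [ha_def]; ring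
    have hmono : (c:ℝ) ^ (-q) ≤ (2:ℝ) ^ (-q) := by
      rw [Real.rpow_neg hc0.le, Real.rpow_neg (by norm_num : (0:ℝ) ≤ 2)]
      exact inv_anti₀ (Real.rpow_pos_of_pos two_pos q)
        (Real.rpow_le_rpow (by norm_num) hc2 hq0)
    have h2q : (2:ℝ) ^ (-q) = (200 * (n:ℝ))⁻¹ := by
      rw [Real.rpow_def_of_pos two_pos]
      have hlq : Real.log 2 * (-q) = -Real.log (200 * (n:ℝ)) := by
        rw [hq_def, mul_neg]
        congr 1
        field_simp
      rw [hlq, Real.exp_neg, Real.exp_log h200n0]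
    have hn0 : (n:ℝ) ≠ 0 := by positivity
    calc ((n : ℝ) * c) * (2 * (c:ℝ) ^ (-a)) = 2 * n * ((c:ℝ) * (c:ℝ) ^ (-a)) := by ring
      _ = 2 * n * (c:ℝ) ^ (-q) := by rw [hsplit]
      _ ≤ 2 * n * (2:ℝ) ^ (-q) := by
          apply mul_le_mul_of_nonneg_left hmono (by positivity)
      _ = 2 * n * (200 * (n:ℝ))⁻¹ := by rw [h2q]
      _ = 1/100 := by
          field_simp
          ring
  have hbad : μ A ≤ ENNReal.ofReal (1/100) := by
    calc μ A ≤ ∑' p : Fin n × Fin c, μ {ω | t p < |ε ω p|} := measure_iUnion_le _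
      _ ≤ ∑' p : Fin n × Fin c,
          ENNReal.ofReal (2 * Real.exp (-(a * Real.log c))) :=
            ENNReal.tsum_le_tsum htail'
      _ = (Fintype.card (Fin n × Fin c)) •
          ENNReal.ofReal (2 * Real.exp (-(a * Real.log c))) := by
            rw [tsum_fintype]; simp
      _ = ENNReal.ofReal (((n:ℝ) * c) * (2 * Real.exp (-(a * Real.log c)))) := by
            rw [nsmul_eq_mul, Fintype.card_prod, Fintype.card_fin, Fintype.card_fin]
            rw [ENNReal.ofReal_mul (by positivity : (0:ℝ) ≤ (n:ℝ) * c)]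
            congr 1
            rw [← ENNReal.ofReal_natCast (n * c)]
            congr 1
            push_cast
            ring
      _ ≤ ENNReal.ofReal (1/100) := ENNReal.ofReal_le_ofReal harith
  -- good event implies the bound
  set r : ℝ := K0 * s * frobNorm X * frobNorm W with hr_def
  have hr0 : 0 ≤ r := by
    have := frobNorm_nonneg X; have := frobNorm_nonneg W; positivity
  have hsub : Aᶜ ⊆ {ω | |g (H + ε ω) - g H| ≤
      (Real.sqrt 2 * K0) * (2 : ℝ) ^ (-(b : ℤ)) * Real.sqrt (Real.log c / d) * ‖gradient g H‖ *
        frobNorm X * frobNorm W +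
      M / 2 * (Real.sqrt 2 * K0) ^ 2 * (2 : ℝ) ^ (-(2 * b : ℤ)) * (Real.log c / d) *
        frobNorm X ^ 2 * frobNorm W ^ 2} := by
    intro ω hω
    simp only [hA_def, Set.compl_iUnion, Set.mem_iInter, Set.mem_compl_iff, Set.mem_setOf_eq,
      not_lt] at hω
    have hnorm : ‖ε ω‖ ≤ r := by
      have hsum : ∑ p : Fin n × Fin c, ‖ε ω p‖ ^ 2 ≤ r ^ 2 := by
        have h1 : ∀ p : Fin n × Fin c, ‖ε ω p‖ ^ 2 ≤ (t p) ^ 2 := by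
          intro p
          rw [Real.norm_eq_abs]
          exact pow_le_pow_left₀ (abs_nonneg _) (hω p) 2
        calc ∑ p : Fin n × Fin c, ‖ε ω p‖ ^ 2 ≤ ∑ p : Fin n × Fin c, (t p) ^ 2 :=
              Finset.sum_le_sum fun p _ => h1 p
          _ = r ^ 2 := by
              have hfX : frobNorm X ^ 2 = ∑ i, euclNorm (X i) ^ 2 := by
                rw [frobNorm_sq]
                simp_rw [euclNorm_sq]
              have hfW : frobNorm W ^ 2 = ∑ j, euclNorm (fun k => W k j) ^ 2 := by
                rw [frobNorm_sq]
                simp_rw [euclNorm_sq]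
                rw [Finset.sum_comm]
              have hsum_t : ∑ p : Fin n × Fin c, (t p) ^ 2
                  = (K0 * s) ^ 2 *
                    ((∑ i, euclNorm (X i) ^ 2) * (∑ j, euclNorm (fun k => W k j) ^ 2)) := by
                rw [Fintype.sum_prod_type, Finset.sum_mul_sum, Finset.mul_sum]
                refine Finset.sum_congr rfl fun i _ => ?_
                rw [Finset.mul_sum]
                refine Finset.sum_congr rfl fun j _ => ?_
                simp only [ht_def]
                ring
              rw [hsum_t, hr_def,
                show (K0 * s * frobNorm X * frobNorm W) ^ 2
                  = (K0 * s) ^ 2 * (frobNorm X ^ 2 * frobNorm W ^ 2) by ring,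
                hfX, hfW]
      calc ‖ε ω‖ = Real.sqrt (∑ p : Fin n × Fin c, ‖ε ω p‖ ^ 2) :=
            EuclideanSpace.norm_eq (ε ω)
        _ ≤ Real.sqrt (r ^ 2) := Real.sqrt_le_sqrt hsum
        _ = r := Real.sqrt_sq hr0
    have htay := taylor_aux g hg M hM hHess H (ε ω)
    have hmid : ‖gradient g H‖ * ‖ε ω‖ + M * ‖ε ω‖ ^ 2 ≤
        ‖gradient g H‖ * r + M * r ^ 2 := by
      have hg0 : 0 ≤ ‖gradient g H‖ := norm_nonneg _
      have he0 : 0 ≤ ‖ε ω‖ := norm_nonneg _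
      exact add_le_add (mul_le_mul_of_nonneg_left hnorm hg0)
        (mul_le_mul_of_nonneg_left (pow_le_pow_left₀ he0 hnorm 2) hM)
    have hfinal : ‖gradient g H‖ * r + M * r ^ 2 ≤
        (Real.sqrt 2 * K0) * (2 : ℝ) ^ (-(b : ℤ)) * Real.sqrt (Real.log c / d) *
          ‖gradient g H‖ * frobNorm X * frobNorm W +
        M / 2 * (Real.sqrt 2 * K0) ^ 2 * (2 : ℝ) ^ (-(2 * b : ℤ)) * (Real.log c / d) *
          frobNorm X ^ 2 * frobNorm W ^ 2 := by
      have hsq2 : (Real.sqrt 2) ^ 2 = 2 := Real.sq_sqrt (by norm_num)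
      have h1 : ‖gradient g H‖ * r ≤
          (Real.sqrt 2 * K0) * (2 : ℝ) ^ (-(b : ℤ)) * Real.sqrt (Real.log c / d) *
            ‖gradient g H‖ * frobNorm X * frobNorm W := by
        have hrw : (Real.sqrt 2 * K0) * (2 : ℝ) ^ (-(b : ℤ)) * Real.sqrt (Real.log c / d) *
            ‖gradient g H‖ * frobNorm X * frobNorm W = Real.sqrt 2 * (‖gradient g H‖ * r) := by
          rw [hr_def, hs_def]; ring
        rw [hrw]
        have h12 : (1:ℝ) ≤ Real.sqrt 2 := by
          rw [show (1:ℝ) = Real.sqrt 1 by simp]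
          exact Real.sqrt_le_sqrt (by norm_num)
        exact le_mul_of_one_le_left (mul_nonneg (norm_nonneg _) hr0) h12
      have h2 : M * r ^ 2 =
          M / 2 * (Real.sqrt 2 * K0) ^ 2 * (2 : ℝ) ^ (-(2 * b : ℤ)) * (Real.log c / d) *
            frobNorm X ^ 2 * frobNorm W ^ 2 := by
        rw [hr_def, mul_pow (Real.sqrt 2) K0, hsq2]
        rw [mul_pow, mul_pow, mul_pow, hssq]
        ring
      linarith
    exact le_trans htay (le_trans hmid hfinal)
  -- conclude
  have h1le : (1 : ENNReal) ≤ μ Aᶜ + ENNReal.ofReal (1/100) := by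
    have : (1 : ENNReal) = μ Set.univ := (measure_univ (μ := μ)).symm
    rw [this, show (Set.univ : Set Ω) = Aᶜ ∪ A by simp]
    exact le_trans (measure_union_le _ _) (add_le_add le_rfl hbad)
  have h99 : ENNReal.ofReal 0.99 ≤ μ Aᶜ := by
    have := tsub_le_iff_right.2 h1le
    refine le_trans ?_ this
    rw [show (1 : ENNReal) = ENNReal.ofReal 1 by simp,
      ← ENNReal.ofReal_sub 1 (by norm_num : (0:ℝ) ≤ 1/100)]
    norm_num
  exact le_trans h99 (measure_mono hsub)
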